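/- The minimal optimal strategy β : ℝ → ℝ, defined by β(w) = min{b ∈ ℝ : H(w, b) = V(w)}, is continuous on ℝ. -/

import Mathlib

/-- `f` is affine on the set `s`. -/
def AffOn (f : ℝ → ℝ) (s : Set ℝ) : Prop := ∃ a c : ℝ, ∀ y ∈ s, f y = a * y + c

/-- Left derivative of `f` at `x`. -/
noncomputable def lDeriv (f : ℝ → ℝ) (x : ℝ) : ℝ := derivWithin f (Set.Iio x) x

/-- Right derivative of `f` at `x`. -/
noncomputable def rDeriv (f : ℝ → ℝ) (x : ℝ) : ℝ := derivWithin f (Set.Ioi x) x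

/-- `f` is piecewise affine with partition points `x 1 < x 2 < … < x N`
(no partition points if `N = 0`, in which case `f` is affine on all of `ℝ`). -/
def PWAff (f : ℝ → ℝ) (N : ℕ) (x : ℕ → ℝ) : Prop :=
  (∀ i, 1 ≤ i → i + 1 ≤ N → x i < x (i + 1)) ∧
  (N = 0 → AffOn f Set.univ) ∧
  (1 ≤ N → AffOn f (Set.Iic (x 1)) ∧ AffOn f (Set.Ici (x N)) ∧
    ∀ i, 1 ≤ i → i + 1 ≤ N → AffOn f (Set.Icc (x i) (x (i + 1))))

/-- `f` belongs to class `H` as witnessed by the points `x 1 < … < x N`: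
piecewise linear, concave on `ℝ`, and eventually constant. -/
def ClassHAux (f : ℝ → ℝ) (N : ℕ) (x : ℕ → ℝ) : Prop :=
  PWAff f N x ∧ ConcaveOn ℝ Set.univ f ∧ ∃ xb : ℝ, ∀ y, xb ≤ y → f y = f xb

/-- `f` belongs to class `H`. -/
def ClassH (f : ℝ → ℝ) : Prop := ∃ N x, ClassHAux f N x

/-- `x 1 < … < x N` are the singular values of the class-`H` function `f`:
they partition `ℝ` into pieces on which `f` is affine and each of them is a genuine
kink, i.e. the right derivative is strictly smaller than the left derivative there. -/
def HasSingVals (f : ℝ → ℝ) (N : ℕ) (x : ℕ → ℝ) : Prop :=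
  ClassHAux f N x ∧ ∀ i, 1 ≤ i → i ≤ N → rDeriv f (x i) < lDeriv f (x i)

/-- The dynamic-programming objective
`H(w,b) = R⁻¹ (p f(wR + b(u−R)) + (1−p) g(wR + b(d−R)))`. -/
noncomputable def Hfun (R u d p : ℝ) (f g : ℝ → ℝ) (w b : ℝ) : ℝ :=
  R⁻¹ * (p * f (w * R + b * (u - R)) + (1 - p) * g (w * R + b * (d - R)))

/-- The value function `V(w) = sup_b H(w,b)`. -/
noncomputable def Vfun (R u d p : ℝ) (f g : ℝ → ℝ) (w : ℝ) : ℝ :=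
  ⨆ b : ℝ, Hfun R u d p f g w b

/-- The set of maximizers `B(w) = {b : H(w,b) = V(w)}`. -/
noncomputable def Bset (R u d p : ℝ) (f g : ℝ → ℝ) (w : ℝ) : Set ℝ :=
  {b : ℝ | Hfun R u d p f g w b = Vfun R u d p f g w}

/-- The minimal optimal strategy `β(w) = min B(w)`. -/
noncomputable def betaFun (R u d p : ℝ) (f g : ℝ → ℝ) (w : ℝ) : ℝ :=
  sInf (Bset R u d p f g w)

/-- The grid line `C^u = {(w,b) : wR + b(u−R) = c}`. -/
def Cu (R u : ℝ) (c : ℝ) : Set (ℝ × ℝ) := {pt | pt.1 * R + pt.2 * (u - R) = c}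

/-- The grid line `C^d = {(w,b) : wR + b(d−R) = c}`. -/
def Cd (R d : ℝ) (c : ℝ) : Set (ℝ × ℝ) := {pt | pt.1 * R + pt.2 * (d - R) = c}

/-- The grid `G`, the union of the lines `C^u_i`, `1 ≤ i ≤ Nu`, and `C^d_j`, `1 ≤ j ≤ Nd`. -/
def Grid (R u d : ℝ) (Nu : ℕ) (xu : ℕ → ℝ) (Nd : ℕ) (xd : ℕ → ℝ) : Set (ℝ × ℝ) :=
  (⋃ i ∈ Finset.Icc 1 Nu, Cu R u (xu i)) ∪ (⋃ j ∈ Finset.Icc 1 Nd, Cd R d (xd j))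

/-- The open parallelogram `D_ij`, for `0 ≤ i ≤ Nu`, `0 ≤ j ≤ Nd`, with the conventions
`x^u_0 = x^d_0 = −∞` and `x^u_{Nu+1} = x^d_{Nd+1} = +∞`. -/
def Dset (R u d : ℝ) (Nu : ℕ) (xu : ℕ → ℝ) (Nd : ℕ) (xd : ℕ → ℝ) (i j : ℕ) : Set (ℝ × ℝ) :=
  {pt | (1 ≤ i → xu i < pt.1 * R + pt.2 * (u - R)) ∧
        (i < Nu → pt.1 * R + pt.2 * (u - R) < xu (i + 1)) ∧
        (1 ≤ j → xd j < pt.1 * R + pt.2 * (d - R)) ∧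
        (j < Nd → pt.1 * R + pt.2 * (d - R) < xd (j + 1))}

section BetaAux
open Set Filter

/-- Sliding increment inequality for concave functions. -/
lemma hconc_slide {f : ℝ → ℝ} (hf : ConcaveOn ℝ Set.univ f) {x x' δ : ℝ}
    (hx : x ≤ x') (hδ : 0 ≤ δ) : f (x' + δ) - f x' ≤ f (x + δ) - f x := by
  rcases hx.eq_or_lt with rfl | hxx
  · exact le_of_eq rfl
  have hLne : x' + δ - x ≠ 0 := by intro h; nlinarith
  have hL : 0 < x' + δ - x := by linarith
  set a := (x' - x) / (x' + δ - x) with hadef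
  have ha0 : 0 ≤ a := div_nonneg (by linarith) hL.le
  have hb0 : 0 ≤ 1 - a := by
    have : a ≤ 1 := by rw [hadef, div_le_one hL]; linarith
    linarith
  have e1 : a • x + (1 - a) • (x' + δ) = x + δ := by
    simp only [smul_eq_mul, hadef]; field_simp; ring
  have e2 : (1 - a) • x + a • (x' + δ) = x' := by
    simp only [smul_eq_mul, hadef]; field_simp; ring
  have h1 := hf.2 (mem_univ x) (mem_univ (x' + δ)) ha0 hb0 (by ring)
  have h2 := hf.2 (mem_univ x) (mem_univ (x' + δ)) hb0 ha0 (by ring)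
  rw [e1] at h1
  rw [e2] at h2
  simp only [smul_eq_mul] at h1 h2
  linarith

lemma hmono_cH {f : ℝ → ℝ} (hf : ConcaveOn ℝ Set.univ f) {xb : ℝ}
    (hc : ∀ y, xb ≤ y → f y = f xb) : Monotone f := by
  intro y1 y2 h
  have hδ : (0:ℝ) ≤ y2 - y1 := by linarith
  have hs := hconc_slide hf (le_max_left y1 xb) hδ
  have h1 : f (max y1 xb + (y2 - y1)) = f xb :=
    hc _ (by have := le_max_right y1 xb; linarith)
  have h2 : f (max y1 xb) = f xb := hc _ (le_max_right _ _)
  have h3 : y1 + (y2 - y1) = y2 := by ring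
  rw [h1, h2, h3] at hs
  linarith

lemma hbdd_cH {f : ℝ → ℝ} (hf : ConcaveOn ℝ Set.univ f) {xb : ℝ}
    (hc : ∀ y, xb ≤ y → f y = f xb) : ∀ y, f y ≤ f xb := by
  intro y
  rcases le_total y xb with h | h
  · exact hmono_cH hf hc h
  · exact (hc y h).le

lemma htendsto_cH {f : ℝ → ℝ} (hf : ConcaveOn ℝ Set.univ f) {xb : ℝ}
    (hc : ∀ y, xb ≤ y → f y = f xb) (hnc : ∃ a b, f a ≠ f b) :
    Tendsto f atBot atBot := by
  obtain ⟨a, b, hab⟩ := hnc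
  obtain ⟨y1, y2, h12, hfy⟩ : ∃ y1 y2, y1 < y2 ∧ f y1 < f y2 := by
    rcases lt_trichotomy a b with h | h | h
    · exact ⟨a, b, h, lt_of_le_of_ne (hmono_cH hf hc h.le) hab⟩
    · exact absurd (congrArg f h) hab
    · exact ⟨b, a, h, lt_of_le_of_ne (hmono_cH hf hc h.le) (Ne.symm hab)⟩
  set m := (f y2 - f y1) / (y2 - y1) with hmdef
  have hm' : m * (y2 - y1) = f y2 - f y1 := by
    rw [hmdef, div_mul_cancel₀ _ (show y2 - y1 ≠ 0 by intro h; nlinarith)]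
  have hm0 : 0 < m := div_pos (by linarith) (by linarith)
  have key : ∀ y ≤ y1, f y ≤ f y1 + m * (y - y1) := by
    intro y hy
    have hy2 : (0:ℝ) < y2 - y := by linarith
    have hy2ne : y2 - y ≠ 0 := ne_of_gt hy2
    have ha0 : 0 ≤ (y2 - y1) / (y2 - y) := div_nonneg (by linarith) hy2.le
    have hb0 : 0 ≤ (y1 - y) / (y2 - y) := div_nonneg (by linarith) hy2.le
    have hab1 : (y2 - y1) / (y2 - y) + (y1 - y) / (y2 - y) = 1 := by
      field_simp; ring
    have h1 := hf.2 (mem_univ y) (mem_univ y2) ha0 hb0 hab1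
    have e1 : ((y2 - y1) / (y2 - y)) • y + ((y1 - y) / (y2 - y)) • y2 = y1 := by
      simp only [smul_eq_mul]; field_simp; ring
    rw [e1] at h1
    simp only [smul_eq_mul] at h1
    have h2 := mul_le_mul_of_nonneg_left h1 hy2.le
    have e2 : (y2 - y) * ((y2 - y1) / (y2 - y) * f y + (y1 - y) / (y2 - y) * f y2)
        = (y2 - y1) * f y + (y1 - y) * f y2 := by field_simp
    rw [e2] at h2
    have hexp : (y2 - y1) * (f y1 + m * (y - y1) - f y)
        = (y2 - y) * f y1 - ((y2 - y1) * f y + (y1 - y) * f y2) := by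
      linear_combination (y - y1) * hm'
    have h4 : 0 ≤ (y2 - y1) * (f y1 + m * (y - y1) - f y) := by
      rw [hexp]; linarith
    nlinarith
  have hline : Tendsto (fun y => f y1 + m * (y - y1)) atBot atBot := by
    apply tendsto_atBot_add_const_left
    have h5 : Tendsto (fun y : ℝ => y - y1) atBot atBot :=
      tendsto_atBot_add_const_right _ (-y1) tendsto_id
    exact h5.const_mul_atBot hm0
  exact tendsto_atBot_mono' atBot (eventually_atBot.2 ⟨y1, key⟩) hline

/-- The objective along a budget line, parametrized by the `f`-coordinate. -/
noncomputable def PhiF (p A C : ℝ) (f g : ℝ → ℝ) (s t : ℝ) : ℝ :=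
  p * f t + (1 - p) * g ((s - C * t) / A)

/-- The set of maximizers of `PhiF p A C f g s`. -/
def ArgS (p A C : ℝ) (f g : ℝ → ℝ) (s : ℝ) : Set ℝ :=
  {t | ∀ τ, PhiF p A C f g s τ ≤ PhiF p A C f g s t}

/-- The least maximizer. -/
noncomputable def tstar (p A C : ℝ) (f g : ℝ → ℝ) (s : ℝ) : ℝ :=
  sInf (ArgS p A C f g s)

/-- Standing hypotheses. -/
structure GoodH (p A C : ℝ) (f g : ℝ → ℝ) : Prop where
  hp0 : 0 < p
  hp1 : p < 1
  hA : 0 < A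
  hC : 0 < C
  hfco : ConcaveOn ℝ Set.univ f
  hgco : ConcaveOn ℝ Set.univ g
  hfc : ∃ xb, ∀ y, xb ≤ y → f y = f xb
  hgc : ∃ xb, ∀ y, xb ≤ y → g y = g xb
  hfnc : ∃ a b, f a ≠ f b
  hgnc : ∃ a b, g a ≠ g b

namespace GoodH

variable {p A C : ℝ} {f g : ℝ → ℝ} (H : GoodH p A C f g)
include H

lemma fcont : Continuous f := H.hfco.locallyLipschitz.continuous
lemma gcont : Continuous g := H.hgco.locallyLipschitz.continuous

lemma phi_cont (s : ℝ) : Continuous (PhiF p A C f g s) := by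
  unfold PhiF
  exact (continuous_const.mul H.fcont).add
    (continuous_const.mul (H.gcont.comp (by fun_prop)))

lemma phi_tendsto_bot (s : ℝ) : Tendsto (PhiF p A C f g s) atBot atBot := by
  obtain ⟨xg, hxg⟩ := H.hgc
  have hb : ∀ t, PhiF p A C f g s t ≤ p * f t + (1 - p) * g xg := by
    intro t
    unfold PhiF
    have := hbdd_cH H.hgco hxg ((s - C * t) / A)
    nlinarith [H.hp1]
  have hl : Tendsto (fun t => p * f t + (1 - p) * g xg) atBot atBot := by
    apply tendsto_atBot_add_const_right
    exact (htendsto_cH H.hfco (H.hfc.choose_spec) H.hfnc).const_mul_atBot H.hp0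
  exact tendsto_atBot_mono' atBot (Eventually.of_forall hb) hl

lemma phi_tendsto_top (s : ℝ) : Tendsto (PhiF p A C f g s) atTop atBot := by
  obtain ⟨xf, hxf⟩ := H.hfc
  have hb : ∀ t, PhiF p A C f g s t ≤ (1 - p) * g ((s - C * t) / A) + p * f xf := by
    intro t
    unfold PhiF
    have := hbdd_cH H.hfco hxf t
    nlinarith [H.hp0]
  have harg : Tendsto (fun t : ℝ => (s - C * t) / A) atTop atBot := by
    apply Tendsto.atBot_div_const H.hA
    apply tendsto_atBot_add_const_left
    exact (tendsto_neg_atTop_atBot.comp (tendsto_id.const_mul_atTop H.hC))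
  have hl : Tendsto (fun t : ℝ => (1 - p) * g ((s - C * t) / A) + p * f xf)
      atTop atBot := by
    apply tendsto_atBot_add_const_right
    exact ((htendsto_cH H.hgco (H.hgc.choose_spec) H.hgnc).comp harg).const_mul_atBot
      (by linarith [H.hp1])
  exact tendsto_atBot_mono' atTop (Eventually.of_forall hb) hl

lemma exists_max (s : ℝ) : ∃ t, t ∈ ArgS p A C f g s := by
  have := (H.phi_cont s).exists_forall_ge (f := PhiF p A C f g s) ?_
  · exact this
  · rw [cocompact_eq_atBot_atTop]
    exact tendsto_sup.2 ⟨H.phi_tendsto_bot s, H.phi_tendsto_top s⟩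

lemma arg_bddBelow (s : ℝ) : BddBelow (ArgS p A C f g s) := by
  obtain ⟨t0, ht0⟩ := H.exists_max s
  obtain ⟨T, hT⟩ := eventually_atBot.1
    ((H.phi_tendsto_bot s).eventually_lt_atBot (PhiF p A C f g s t0))
  refine ⟨T, fun t ht => ?_⟩
  by_contra hcon
  push_neg at hcon
  exact absurd (ht t0) (not_le.2 (hT t hcon.le))

lemma arg_closed (s : ℝ) : IsClosed (ArgS p A C f g s) := by
  have : ArgS p A C f g s = ⋂ τ, {t | PhiF p A C f g s τ ≤ PhiF p A C f g s t} := by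
    ext t; simp [ArgS, mem_iInter]
  rw [this]
  exact isClosed_iInter fun τ => isClosed_le continuous_const (H.phi_cont s)

lemma tstar_mem (s : ℝ) : tstar p A C f g s ∈ ArgS p A C f g s :=
  (H.arg_closed s).csInf_mem (H.exists_max s) (H.arg_bddBelow s)

lemma tstar_le {s t : ℝ} (ht : t ∈ ArgS p A C f g s) : tstar p A C f g s ≤ t :=
  csInf_le (H.arg_bddBelow s) ht

lemma tstar_mono {s s' : ℝ} (hss : s ≤ s') :
    tstar p A C f g s ≤ tstar p A C f g s' := by
  by_contra hcon
  push_neg at hcon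
  set t := tstar p A C f g s with htdef
  set t' := tstar p A C f g s' with htdef'
  have hAne : A ≠ 0 := ne_of_gt H.hA
  have hx : (s - C * t) / A ≤ (s' - C * t) / A := by gcongr; exact H.hA.le
  have hδ : 0 ≤ C * (t - t') / A :=
    div_nonneg (mul_nonneg H.hC.le (by linarith)) H.hA.le
  have hsl := hconc_slide H.hgco hx hδ
  have e1 : (s - C * t) / A + C * (t - t') / A = (s - C * t') / A := by
    field_simp; ring
  have e2 : (s' - C * t) / A + C * (t - t') / A = (s' - C * t') / A := by
    field_simp; ring
  rw [e1, e2] at hsl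
  have hmax' := (H.tstar_mem s') t
  have hq : (0:ℝ) ≤ 1 - p := by linarith [H.hp1]
  have hkey : PhiF p A C f g s t ≤ PhiF p A C f g s t' := by
    simp only [PhiF] at hmax' ⊢
    have h5 := mul_le_mul_of_nonneg_left hsl hq
    linarith
  have ht'mem : t' ∈ ArgS p A C f g s := fun τ => le_trans ((H.tstar_mem s) τ) hkey
  exact absurd (H.tstar_le ht'mem) (not_le.2 hcon)

lemma tstar_lip {s s' : ℝ} (hss : s ≤ s') :
    tstar p A C f g s' ≤ tstar p A C f g s + (s' - s) / C := by
  by_contra hcon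
  push_neg at hcon
  set t := tstar p A C f g s with htdef
  set t' := tstar p A C f g s' with htdef'
  have hΔ : 0 ≤ (s' - s) / C := div_nonneg (by linarith) H.hC.le
  have ht1 : t ≤ t' - (s' - s) / C := by linarith
  have hsl := hconc_slide H.hfco ht1 hΔ
  have e0 : t' - (s' - s) / C + (s' - s) / C = t' := by ring
  rw [e0] at hsl
  have hCne : C ≠ 0 := ne_of_gt H.hC
  have hAne : A ≠ 0 := ne_of_gt H.hA
  have e1 : (s' - C * (t + (s' - s) / C)) / A = (s - C * t) / A := by
    field_simp; ring
  have e2 : (s' - C * t') / A = (s - C * (t' - (s' - s) / C)) / A := by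
    field_simp; ring
  have hmax := (H.tstar_mem s) (t' - (s' - s) / C)
  have hkey : PhiF p A C f g s' t' ≤ PhiF p A C f g s' (t + (s' - s) / C) := by
    simp only [PhiF] at hmax ⊢
    rw [e1, e2]
    have h5 := mul_le_mul_of_nonneg_left hsl H.hp0.le
    linarith
  have hmem : t + (s' - s) / C ∈ ArgS p A C f g s' :=
    fun τ => le_trans ((H.tstar_mem s') τ) hkey
  exact absurd (H.tstar_le hmem) (not_le.2 hcon)

lemma tstar_cont : Continuous (tstar p A C f g) := by
  have key : ∀ s s', s ≤ s' →
      |tstar p A C f g s' - tstar p A C f g s| ≤ C⁻¹ * |s' - s| := by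
    intro s s' h
    have h1 := H.tstar_mono h
    have h2 := H.tstar_lip h
    rw [abs_of_nonneg (by linarith), abs_of_nonneg (by linarith)]
    rw [div_eq_inv_mul] at h2
    linarith
  have hlip : LipschitzWith ⟨C⁻¹, inv_nonneg.2 H.hC.le⟩ (tstar p A C f g) := by
    apply LipschitzWith.of_dist_le_mul
    intro x y
    show dist _ _ ≤ C⁻¹ * dist x y
    rcases le_total x y with h | h
    · rw [Real.dist_eq, Real.dist_eq, abs_sub_comm (tstar p A C f g x), abs_sub_comm x]
      exact key x y h
    · rw [Real.dist_eq, Real.dist_eq]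
      exact key y x h
  exact hlip.continuous

end GoodH

end BetaAux

/-- The minimal optimal strategy `β` is continuous on `ℝ`. -/
theorem stmt_10 (R u d p : ℝ) (hd : 0 < d) (hdR : d < R) (hRu : R < u)
    (hp0 : 0 < p) (hp1 : p < 1)
    (f g : ℝ → ℝ) (hf : ClassH f) (hg : ClassH g)
    (hfnc : ∃ a b : ℝ, f a ≠ f b) (hgnc : ∃ a b : ℝ, g a ≠ g b) :
    Continuous (betaFun R u d p f g) := by
  obtain ⟨Nf, xsf, -, hfco, xf, hfcc⟩ := hf
  obtain ⟨Ng, xsg, -, hgco, xg, hgcc⟩ := hg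
  have hR : 0 < R := lt_trans hd hdR
  have hA : (0:ℝ) < u - R := by linarith
  have hC : (0:ℝ) < R - d := by linarith
  have hAne : u - R ≠ 0 := ne_of_gt hA
  have hCne : R - d ≠ 0 := ne_of_gt hC
  have H : GoodH p (u - R) (R - d) f g :=
    ⟨hp0, hp1, hA, hC, hfco, hgco, ⟨xf, hfcc⟩, ⟨xg, hgcc⟩, hfnc, hgnc⟩
  have hHP : ∀ w b : ℝ, Hfun R u d p f g w b
      = R⁻¹ * PhiF p (u - R) (R - d) f g (R * (u - d) * w) (w * R + b * (u - R)) := by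
    intro w b
    unfold Hfun PhiF
    have e : (R * (u - d) * w - (R - d) * (w * R + b * (u - R))) / (u - R)
        = w * R + b * (d - R) := by field_simp; ring
    rw [e]
  have hbeta : ∀ w, betaFun R u d p f g w
      = (tstar p (u - R) (R - d) f g (R * (u - d) * w) - w * R) / (u - R) := by
    intro w
    have htsmem := H.tstar_mem (R * (u - d) * w)
    have hub : ∀ b : ℝ, Hfun R u d p f g w b
        ≤ R⁻¹ * PhiF p (u - R) (R - d) f g (R * (u - d) * w)
            (tstar p (u - R) (R - d) f g (R * (u - d) * w)) := by
      intro b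
      rw [hHP w b]
      exact mul_le_mul_of_nonneg_left (htsmem _) (inv_nonneg.2 hR.le)
    have hb0t : w * R + ((tstar p (u - R) (R - d) f g (R * (u - d) * w) - w * R) / (u - R))
        * (u - R) = tstar p (u - R) (R - d) f g (R * (u - d) * w) := by
      field_simp; ring
    have hHb0 : Hfun R u d p f g w
        ((tstar p (u - R) (R - d) f g (R * (u - d) * w) - w * R) / (u - R))
        = R⁻¹ * PhiF p (u - R) (R - d) f g (R * (u - d) * w)
            (tstar p (u - R) (R - d) f g (R * (u - d) * w)) := by
      rw [hHP, hb0t]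
    have hV : Vfun R u d p f g w
        = R⁻¹ * PhiF p (u - R) (R - d) f g (R * (u - d) * w)
            (tstar p (u - R) (R - d) f g (R * (u - d) * w)) := by
      unfold Vfun
      apply le_antisymm
      · exact ciSup_le hub
      · rw [← hHb0]
        refine le_ciSup ⟨R⁻¹ * PhiF p (u - R) (R - d) f g (R * (u - d) * w)
          (tstar p (u - R) (R - d) f g (R * (u - d) * w)), ?_⟩ _
        rintro y ⟨b, rfl⟩
        exact hub b
    have hRinvne : (R:ℝ)⁻¹ ≠ 0 := inv_ne_zero (ne_of_gt hR)
    have hBmem : ∀ b : ℝ, b ∈ Bset R u d p f g w ↔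
        (w * R + b * (u - R)) ∈ ArgS p (u - R) (R - d) f g (R * (u - d) * w) := by
      intro b
      unfold Bset
      rw [Set.mem_setOf_eq, hV, hHP w b]
      constructor
      · intro hb τ
        have heq := mul_left_cancel₀ hRinvne hb
        rw [heq]
        exact htsmem τ
      · intro hb
        have h1 := htsmem (w * R + b * (u - R))
        have h2 := hb (tstar p (u - R) (R - d) f g (R * (u - d) * w))
        rw [le_antisymm h1 h2]
    obtain ⟨T, hT⟩ := H.arg_bddBelow (R * (u - d) * w)
    have hBbdd : BddBelow (Bset R u d p f g w) := by
      refine ⟨(T - w * R) / (u - R), fun b hb => ?_⟩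
      have h3 := hT ((hBmem b).1 hb)
      rw [div_le_iff₀ hA]
      linarith
    have hb0mem : ((tstar p (u - R) (R - d) f g (R * (u - d) * w) - w * R) / (u - R))
        ∈ Bset R u d p f g w := by
      rw [hBmem _, hb0t]
      exact htsmem
    unfold betaFun
    apply le_antisymm (csInf_le hBbdd hb0mem)
    apply le_csInf ⟨_, hb0mem⟩
    intro b hb
    have h1 : tstar p (u - R) (R - d) f g (R * (u - d) * w) ≤ w * R + b * (u - R) :=
      H.tstar_le ((hBmem b).1 hb)
    rw [div_le_iff₀ hA]
    linarith
  have heq : betaFun R u d p f g = fun w =>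
      (tstar p (u - R) (R - d) f g (R * (u - d) * w) - w * R) / (u - R) := funext hbeta
  rw [heq]
  apply Continuous.div_const
  apply Continuous.sub
  · exact H.tstar_cont.comp (by fun_prop)
  · fun_prop
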